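/- Let S = {(0,0,0), ±(1,1,0), ±(0,1,1), ±(1,0,1)} ⊆ ℤ³ and define f : ℤ³ → ℤ ∪ {+∞} by f(x) = (x₁+x₂+x₃)/2 for x ∈ S and f(x) = +∞ otherwise. The system of inequalities f(y) − f(0) ≥ ⟨p, y⟩ for all y ∈ S has the unique real solution p = (1/2, 1/2, 1/2); consequently, the subdifferential ∂f(0) = {(1/2,1/2,1/2)} contains no integer point. -/

import Mathlib

def Sdom : Set (Fin 3 → ℤ) :=
  {![0,0,0], ![1,1,0], ![-1,-1,0], ![0,1,1], ![0,-1,-1], ![1,0,1], ![-1,0,-1]}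

open Classical in
noncomputable def fEx : (Fin 3 → ℤ) → WithTop ℤ :=
  fun x => if x ∈ Sdom then ((x 0 + x 1 + x 2) / 2 : ℤ) else ⊤

def subdiffAtZero : Set (Fin 3 → ℝ) :=
  {p | ∀ y : Fin 3 → ℤ, ∀ zy z0 : ℤ, fEx y = (zy : WithTop ℤ) →
    fEx ![0,0,0] = (z0 : WithTop ℤ) →
    (∑ i, p i * (y i : ℝ)) ≤ (zy : ℝ) - (z0 : ℝ)}

lemma fEx_mem (x : Fin 3 → ℤ) (h : x ∈ Sdom) :
    fEx x = ((x 0 + x 1 + x 2) / 2 : ℤ) := by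
  simp [fEx, h]

lemma f0 : fEx ![0,0,0] = ((0 : ℤ) : WithTop ℤ) := by
  have := fEx_mem ![0,0,0] (by simp [Sdom])
  simpa using this

theorem subdifferential_no_integer_point :
    subdiffAtZero = {fun _ => (1/2 : ℝ)} ∧
    ¬ ∃ q : Fin 3 → ℤ, (fun i => (q i : ℝ)) ∈ subdiffAtZero := by
  have hset : subdiffAtZero = {fun _ => (1/2 : ℝ)} := by
    ext p
    constructor
    · intro hp
      have h1 := hp ![1,1,0] 1 0 (by have := fEx_mem ![1,1,0] (by simp [Sdom]); simpa using this) f0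
      have h2 := hp ![-1,-1,0] (-1) 0 (by have := fEx_mem ![-1,-1,0] (by simp [Sdom]); simpa using this) f0
      have h3 := hp ![0,1,1] 1 0 (by have := fEx_mem ![0,1,1] (by simp [Sdom]); simpa using this) f0
      have h4 := hp ![0,-1,-1] (-1) 0 (by have := fEx_mem ![0,-1,-1] (by simp [Sdom]); simpa using this) f0
      have h5 := hp ![1,0,1] 1 0 (by have := fEx_mem ![1,0,1] (by simp [Sdom]); simpa using this) f0
      have h6 := hp ![-1,0,-1] (-1) 0 (by have := fEx_mem ![-1,0,-1] (by simp [Sdom]); simpa using this) f0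
      simp [Fin.sum_univ_three] at h1 h2 h3 h4 h5 h6
      have e1 : p 0 + p 1 = 1 := by linarith
      have e2 : p 1 + p 2 = 1 := by linarith
      have e3 : p 0 + p 2 = 1 := by linarith
      have : p = fun _ => (1/2 : ℝ) := by
        funext i
        fin_cases i <;> simp <;> linarith
      simpa using this
    · intro hp
      simp only [Set.mem_singleton_iff] at hp
      subst hp
      intro y zy z0 hy h0
      have hz0 : z0 = 0 := by
        rw [f0] at h0
        exact_mod_cast h0.symm
      have hymem : y ∈ Sdom := by
        by_contra hm
        simp [fEx, hm] at hy
      subst hz0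
      rcases hymem with h | h | h | h | h | h | h <;> subst h <;>
        rw [fEx_mem _ (by simp [Sdom])] at hy <;>
        · have hz := WithTop.coe_inj.mp hy
          subst hz
          norm_num [Fin.sum_univ_three, Matrix.cons_val_two, Matrix.tail_cons, Matrix.head_cons]
  refine ⟨hset, ?_⟩
  rintro ⟨q, hq⟩
  rw [hset] at hq
  simp only [Set.mem_singleton_iff] at hq
  have := congrFun hq 0
  simp at this
  have h2 : ((2 * q 0 : ℤ) : ℝ) = ((1 : ℤ) : ℝ) := by push_cast; linarith
  have := Int.cast_injective h2
  omega
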